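/- arXiv:math/0606745 — 2 statements merged into one kernel-verified Lean document; each statement's English description precedes it below -/
import Mathlib

section
/- If E ⊆ ℂ is a compact set and φ_λ(z) is holomorphic in λ ∈ Δ (a disc) for each fixed z, injective on E for each fixed λ, and jointly continuous, then for each n ≥ 2 the function λ ↦ log sup { ∏_{1≤i<j≤n} |φ_λ(z_i) − φ_λ(z_j)| : z_1,…,z_n ∈ E } is subharmonic on Δ. -/
open Real Filter

section Aux

open Metric Set

lemma mv_complex {g : ℂ → ℂ} {w : ℂ} {r : ℝ} (hr : 0 < r)
    (hg : DifferentiableOn ℂ g (closedBall w r)) :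
    ∫ θ in (0:ℝ)..(2*π), g (w + (r:ℂ) * Complex.exp ((θ:ℂ) * Complex.I))
      = (2*π : ℝ) • g w := by
  have h := hg.circleIntegral_sub_inv_smul (mem_ball_self hr)
  rw [circleIntegral] at h
  have key : ∀ θ : ℝ, deriv (circleMap w r) θ • (circleMap w r θ - w)⁻¹ • g (circleMap w r θ)
      = Complex.I • g (circleMap w r θ) := by
    intro θ
    have h0 : circleMap 0 r θ ≠ 0 := by
      simpa using (circleMap_ne_center (ne_of_gt hr) : circleMap (0:ℂ) r θ ≠ 0)
    rw [deriv_circleMap, circleMap_sub_center, smul_smul, mul_comm, ← mul_assoc,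
      inv_mul_cancel₀ h0, one_mul]
  simp only [key] at h
  rw [intervalIntegral.integral_smul] at h
  have h2 : (∫ θ in (0:ℝ)..(2*π), g (circleMap w r θ)) = (2*(π:ℂ)) * g w :=
    mul_left_cancel₀ Complex.I_ne_zero (by rw [← smul_eq_mul, h, smul_eq_mul]; ring)
  simp only [circleMap] at h2
  rw [h2, Complex.real_smul]
  push_cast
  ring

lemma circle_mem_cb {w : ℂ} {r : ℝ} (hr : 0 < r) (θ : ℝ) :
    w + (r:ℂ) * Complex.exp ((θ:ℂ) * Complex.I) ∈ closedBall w r := by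
  have : (w + (r:ℂ) * Complex.exp ((θ:ℂ) * Complex.I)) = circleMap w r θ := rfl
  rw [this]
  exact circleMap_mem_closedBall w hr.le θ

lemma log_abs_mv {F : ℂ → ℂ} {w : ℂ} {r : ℝ} (hr : 0 < r)
    (hF : DifferentiableOn ℂ F (closedBall w r))
    (hclose : ∀ z ∈ closedBall w r, ‖F z - F w‖ < ‖F w‖) :
    Real.log (‖F w‖)
      = (1/(2*π)) * ∫ θ in (0:ℝ)..(2*π),
          Real.log (‖F (w + (r:ℂ) * Complex.exp ((θ:ℂ) * Complex.I))‖) := by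
  have hFw : F w ≠ 0 := by
    intro h0
    have := hclose w (mem_closedBall_self hr.le)
    simp [h0] at this
  have hFwa : 0 < ‖F w‖ := norm_pos_iff.mpr hFw
  have hFz : ∀ z ∈ closedBall w r, 0 < ‖F z‖ := by
    intro z hz
    rcases eq_or_ne (F z) 0 with h0 | h0
    · exfalso; have := hclose z hz; rw [h0] at this; simp at this
    · exact norm_pos_iff.mpr h0
  have slit : ∀ z ∈ closedBall w r, F z / F w ∈ Complex.slitPlane := by
    intro z hz
    refine Complex.mem_slitPlane_iff.mpr (Or.inl ?_)
    have h1 : ‖F z / F w - 1‖ < 1 := by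
      rw [show F z / F w - 1 = (F z - F w) / F w by field_simp]
      rw [norm_div, div_lt_one hFwa]
      exact hclose z hz
    have h2 : |(F z / F w - 1).re| ≤ ‖F z / F w - 1‖ := Complex.abs_re_le_norm _
    have : (F z / F w).re = 1 + (F z / F w - 1).re := by simp
    rw [this]
    linarith [neg_abs_le ((F z / F w - 1).re), h2, h1]
  set g : ℂ → ℂ := fun z => Complex.log (F z / F w) with hg
  have hgd : DifferentiableOn ℂ g (closedBall w r) := by
    intro z hz
    exact (((hF z hz).div_const (F w)).hasDerivWithinAt.clog (slit z hz)).differentiableWithinAt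
  have hmv := mv_complex hr hgd
  have hgw : g w = 0 := by simp [hg, div_self hFw]
  rw [hgw, smul_zero] at hmv
  have hcirc : Continuous fun θ : ℝ => w + (r:ℂ) * Complex.exp ((θ:ℂ) * Complex.I) := by
    fun_prop
  have hgc : Continuous fun θ : ℝ => g (w + (r:ℂ) * Complex.exp ((θ:ℂ) * Complex.I)) := by
    refine (hgd.continuousOn.comp_continuous hcirc ?_)
    exact fun θ => circle_mem_cb hr θ
  have hint : IntervalIntegrable (fun θ : ℝ => g (w + (r:ℂ) * Complex.exp ((θ:ℂ) * Complex.I)))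
      MeasureTheory.volume 0 (2*π) := hgc.intervalIntegrable _ _
  have hre : (∫ θ in (0:ℝ)..(2*π),
      (g (w + (r:ℂ) * Complex.exp ((θ:ℂ) * Complex.I))).re) = 0 := by
    have h3 := (Complex.reCLM.intervalIntegral_comp_comm hint)
    simp only [Complex.reCLM_apply] at h3
    rw [h3, hmv]
    simp
  have hre2 : ∀ θ : ℝ, (g (w + (r:ℂ) * Complex.exp ((θ:ℂ) * Complex.I))).re
      = Real.log (‖F (w + (r:ℂ) * Complex.exp ((θ:ℂ) * Complex.I))‖)
        - Real.log (‖F w‖) := by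
    intro θ
    rw [hg]
    simp only [Complex.log_re, norm_div]
    rw [Real.log_div (ne_of_gt (hFz _ (circle_mem_cb hr θ))) (ne_of_gt hFwa)]
  rw [funext hre2] at hre
  have hlc : Continuous fun θ : ℝ =>
      Real.log (‖F (w + (r:ℂ) * Complex.exp ((θ:ℂ) * Complex.I))‖) := by
    have habs : Continuous fun θ : ℝ =>
        ‖F (w + (r:ℂ) * Complex.exp ((θ:ℂ) * Complex.I))‖ :=
      continuous_norm.comp
        ((hF.continuousOn.comp_continuous hcirc (fun θ => circle_mem_cb hr θ)))
    exact habs.log fun θ => ne_of_gt (hFz _ (circle_mem_cb hr θ))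
  rw [intervalIntegral.integral_sub (hlc.intervalIntegrable _ _)
    (intervalIntegrable_const), intervalIntegral.integral_const, sub_eq_zero] at hre
  have hπ : (2*π) ≠ 0 := by positivity
  rw [hre, smul_eq_mul]
  field_simp
  ring

lemma cont_sSup {α β : Type*} [TopologicalSpace α] [TopologicalSpace β]
    {U : Set α} {K : Set β} (hK : IsCompact K)
    {G : α → β → ℝ}
    (hG : ContinuousOn (fun p : α × β => G p.1 p.2) (U ×ˢ K)) :
    ContinuousOn (fun x => sSup (G x '' K)) U := by
  rw [continuousOn_iff_continuous_restrict]
  haveI : CompactSpace K := isCompact_iff_compactSpace.mp hK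
  have hf : Continuous (fun p : U × K => G p.1.1 p.2.1) := by
    have := hG.comp_continuous (f := fun p : U × K => ((p.1.1, p.2.1) : α × β))
      ((continuous_subtype_val.comp continuous_fst).prodMk
        (continuous_subtype_val.comp continuous_snd))
      (by rintro ⟨x, z⟩; exact ⟨x.2, z.2⟩)
    exact this
  have h := isCompact_univ.continuous_sSup (f := fun (x : U) (z : K) => G x.1 z.1) hf
  have himg : ∀ x : U, G x.1 '' K = (fun z : K => G x.1 z.1) '' univ := by
    intro x
    ext y
    constructor
    · rintro ⟨z, hz, rfl⟩; exact ⟨⟨z, hz⟩, trivial, rfl⟩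
    · rintro ⟨z, _, rfl⟩; exact ⟨z.1, z.2, rfl⟩
  have : (U.domRestrict fun x => sSup (G x '' K))
      = fun x : U => sSup ((fun z : K => G x.1 z.1) '' univ) := by
    funext x
    simp [domRestrict, himg x]
  rw [this]
  exact h

end Aux

/-- `u` is subharmonic on `U`: upper semicontinuous and satisfying the
sub-mean-value inequality on all sufficiently small circles. -/
def SubharmonicOn (u : ℂ → ℝ) (U : Set ℂ) : Prop :=
  UpperSemicontinuousOn u U ∧
    ∀ z ∈ U, ∀ᶠ r : ℝ in nhdsWithin (0 : ℝ) (Set.Ioi (0 : ℝ)),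
      u z ≤ (1 / (2 * π)) * ∫ θ in (0:ℝ)..(2 * π), u (z + (r : ℂ) * Complex.exp ((θ : ℂ) * Complex.I))

theorem log_sup_vandermonde_subharmonic
    (E : Set ℂ) (hE : IsCompact E) (hEne : E.Nonempty)
    (c : ℂ) (R : ℝ) (hR : 0 < R)
    (φ : ℂ → ℂ → ℂ)
    (hol : ∀ z ∈ E, DifferentiableOn ℂ (fun lam => φ lam z) (Metric.ball c R))
    (inj : ∀ lam ∈ Metric.ball c R, Set.InjOn (φ lam) E)
    (cont : ContinuousOn (fun p : ℂ × ℂ => φ p.1 p.2) (Metric.ball c R ×ˢ E))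
    (n : ℕ) (hn : 2 ≤ n) :
    SubharmonicOn
      (fun lam => Real.log (sSup
        {x : ℝ | ∃ z : Fin n → ℂ, (∀ i, z i ∈ E) ∧
          x = ∏ p ∈ Finset.univ.filter (fun p : Fin n × Fin n => p.1 < p.2),
                ‖φ lam (z p.1) - φ lam (z p.2)‖}))
      (Metric.ball c R) := by
  classical
  set P : Finset (Fin n × Fin n) := Finset.univ.filter (fun p : Fin n × Fin n => p.1 < p.2)
    with hPdef
  set G : ℂ → (Fin n → ℂ) → ℝ :=
    fun lam z => ∏ p ∈ P, ‖φ lam (z p.1) - φ lam (z p.2)‖ with hGdef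
  set K : Set (Fin n → ℂ) := {z | ∀ i, z i ∈ E} with hKdef
  have hSet : ∀ lam : ℂ,
      {x : ℝ | ∃ z : Fin n → ℂ, (∀ i, z i ∈ E) ∧
          x = ∏ p ∈ Finset.univ.filter (fun p : Fin n × Fin n => p.1 < p.2),
                ‖φ lam (z p.1) - φ lam (z p.2)‖} = G lam '' K := by
    intro lam
    ext x
    constructor
    · rintro ⟨z, hz, rfl⟩; exact ⟨z, hz, rfl⟩
    · rintro ⟨z, hz, rfl⟩; exact ⟨z, hz, rfl⟩
  have hfun : (fun lam => Real.log (sSup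
      {x : ℝ | ∃ z : Fin n → ℂ, (∀ i, z i ∈ E) ∧
          x = ∏ p ∈ Finset.univ.filter (fun p : Fin n × Fin n => p.1 < p.2),
                ‖φ lam (z p.1) - φ lam (z p.2)‖}))
      = fun lam => Real.log (sSup (G lam '' K)) := by
    funext lam; rw [hSet lam]
  rw [hfun]
  have hK : IsCompact K := by
    have h := isCompact_univ_pi (fun _ : Fin n => hE)
    convert h using 1
    ext z
    simp [hKdef, Set.mem_univ_pi]
  by_cases hinj : ∃ z : Fin n → ℂ, (∀ i, z i ∈ E) ∧ Function.Injective z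
  swap
  · -- degenerate case : every tuple has a repetition, everything is 0
    have hz0 : ∀ (lam : ℂ) (z : Fin n → ℂ), (∀ i, z i ∈ E) → G lam z = 0 := by
      intro lam z hz
      have hni : ¬ Function.Injective z := fun h => hinj ⟨z, hz, h⟩
      obtain ⟨i, j, hij, hne⟩ := Function.not_injective_iff.mp hni
      rcases lt_or_gt_of_ne hne with hlt | hlt
      · refine Finset.prod_eq_zero (i := (i, j))
          (Finset.mem_filter.mpr ⟨Finset.mem_univ _, hlt⟩) ?_
        simp [hij]
      · refine Finset.prod_eq_zero (i := (j, i))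
          (Finset.mem_filter.mpr ⟨Finset.mem_univ _, hlt⟩) ?_
        simp [hij]
    have hS : ∀ lam : ℂ, G lam '' K = {0} := by
      intro lam
      ext x
      simp only [Set.mem_image, Set.mem_singleton_iff]
      constructor
      · rintro ⟨z, hz, rfl⟩; exact hz0 lam z hz
      · rintro rfl
        obtain ⟨e, he⟩ := hEne
        refine ⟨fun _ => e, fun _ => he, ?_⟩
        exact hz0 lam (fun _ => e) (fun _ => he)
    have : (fun lam => Real.log (sSup (G lam '' K))) = fun _ => (0:ℝ) := by
      funext lam
      rw [hS lam, csSup_singleton, Real.log_zero]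
    rw [this]
    refine ⟨continuousOn_const.upperSemicontinuousOn, fun z hz => Eventually.of_forall ?_⟩
    intro r
    simp
  · -- nondegenerate case
    obtain ⟨z0, hz0E, hz0i⟩ := hinj
    have hGcont : ContinuousOn (fun p : ℂ × (Fin n → ℂ) => G p.1 p.2)
        (Metric.ball c R ×ˢ K) := by
      apply continuousOn_finset_prod
      intro p _
      have h1 : ContinuousOn (fun q : ℂ × (Fin n → ℂ) => φ q.1 (q.2 p.1))
          (Metric.ball c R ×ˢ K) := by
        refine ContinuousOn.comp (f := fun q : ℂ × (Fin n → ℂ) => (q.1, q.2 p.1)) cont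
          (Continuous.continuousOn (by fun_prop)) ?_
        rintro ⟨lam, z⟩ hq
        rw [Set.mem_prod] at hq ⊢
        exact ⟨hq.1, hq.2 p.1⟩
      have h2 : ContinuousOn (fun q : ℂ × (Fin n → ℂ) => φ q.1 (q.2 p.2))
          (Metric.ball c R ×ˢ K) := by
        refine ContinuousOn.comp (f := fun q : ℂ × (Fin n → ℂ) => (q.1, q.2 p.2)) cont
          (Continuous.continuousOn (by fun_prop)) ?_
        rintro ⟨lam, z⟩ hq
        rw [Set.mem_prod] at hq ⊢
        exact ⟨hq.1, hq.2 p.2⟩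
      exact continuous_norm.comp_continuousOn (h1.sub h2)
    have hGlam : ∀ lam ∈ Metric.ball c R, ContinuousOn (G lam) K := by
      intro lam hlam
      refine ContinuousOn.comp (f := fun z : Fin n → ℂ => ((lam, z) : ℂ × (Fin n → ℂ)))
        hGcont (Continuous.continuousOn (by fun_prop)) ?_
      intro z hz
      exact Set.mem_prod.mpr ⟨hlam, hz⟩
    set d : ℂ → ℝ := fun lam => sSup (G lam '' K) with hddef
    have hdcont : ContinuousOn d (Metric.ball c R) := cont_sSup hK hGcont
    have hKne : K.Nonempty := ⟨z0, hz0E⟩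
    have himgc : ∀ lam ∈ Metric.ball c R, IsCompact (G lam '' K) :=
      fun lam hlam => hK.image_of_continuousOn (hGlam lam hlam)
    have hbdd : ∀ lam ∈ Metric.ball c R, BddAbove (G lam '' K) :=
      fun lam hlam => (himgc lam hlam).bddAbove
    have hpos : ∀ lam ∈ Metric.ball c R, 0 < d lam := by
      intro lam hlam
      have hGpos : 0 < G lam z0 := by
        apply Finset.prod_pos
        intro p hp
        have hplt : p.1 < p.2 := (Finset.mem_filter.mp hp).2
        refine norm_pos_iff.mpr (sub_ne_zero.mpr ?_)
        intro heq
        exact absurd (hz0i (inj lam hlam (hz0E p.1) (hz0E p.2) heq)) (ne_of_lt hplt)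
      exact lt_of_lt_of_le hGpos (le_csSup (hbdd lam hlam) ⟨z0, hz0E, rfl⟩)
    have hucont : ContinuousOn (fun lam => Real.log (d lam)) (Metric.ball c R) :=
      hdcont.log fun lam hlam => ne_of_gt (hpos lam hlam)
    refine ⟨hucont.upperSemicontinuousOn, ?_⟩
    intro lam0 hlam0
    -- maximizing tuple
    obtain ⟨zs, hzsK, hzsG⟩ := (himgc lam0 hlam0).sSup_mem (hKne.image _)
    set F : ℂ → ℂ := fun lam => ∏ p ∈ P, (φ lam (zs p.1) - φ lam (zs p.2)) with hFdef
    have hFd : DifferentiableOn ℂ F (Metric.ball c R) :=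
      DifferentiableOn.fun_finsetProd fun p _ => (hol _ (hzsK p.1)).sub (hol _ (hzsK p.2))
    have habsF : ∀ lam, ‖F lam‖ = G lam zs := by
      intro lam
      rw [hFdef, hGdef]
      exact norm_prod P _
    have hFpos : 0 < ‖F lam0‖ := by rw [habsF, hzsG]; exact hpos lam0 hlam0
    have hFca : ContinuousAt F lam0 :=
      (hFd.differentiableAt (Metric.isOpen_ball.mem_nhds hlam0)).continuousAt
    obtain ⟨δ, hδ, hδc⟩ := Metric.continuousAt_iff.mp hFca (‖F lam0‖) hFpos
    obtain ⟨ρ₀, hρ₀, hρ₀s⟩ := Metric.isOpen_iff.mp Metric.isOpen_ball lam0 hlam0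
    set ρ : ℝ := min δ ρ₀ / 2 with hρdef
    have hρ : 0 < ρ := by positivity
    have hρδ : ρ < δ := by
      have : min δ ρ₀ ≤ δ := min_le_left _ _
      rw [hρdef]; linarith [lt_min hδ hρ₀]
    have hρρ₀ : ρ < ρ₀ := by
      have : min δ ρ₀ ≤ ρ₀ := min_le_right _ _
      rw [hρdef]; linarith [lt_min hδ hρ₀]
    have hsub : Metric.closedBall lam0 ρ ⊆ Metric.ball c R := fun z hz =>
      hρ₀s (Metric.mem_ball.mpr (lt_of_le_of_lt (Metric.mem_closedBall.mp hz) hρρ₀))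
    have hcl : ∀ z ∈ Metric.closedBall lam0 ρ, ‖F z - F lam0‖ < ‖F lam0‖ := by
      intro z hz
      have := hδc (lt_of_le_of_lt (Metric.mem_closedBall.mp hz) hρδ)
      rwa [Complex.dist_eq] at this
    filter_upwards [Ioo_mem_nhdsGT_of_mem (Set.left_mem_Ico.mpr hρ)] with r hr
    have hcbr : Metric.closedBall lam0 r ⊆ Metric.closedBall lam0 ρ :=
      Metric.closedBall_subset_closedBall hr.2.le
    have key := log_abs_mv hr.1 (hFd.mono (hcbr.trans hsub)) fun z hz => hcl z (hcbr hz)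
    have hFz : ∀ z ∈ Metric.closedBall lam0 ρ, 0 < ‖F z‖ := by
      intro z hz
      rcases eq_or_ne (F z) 0 with h0 | h0
      · exfalso; have := hcl z hz; rw [h0] at this; simp at this
      · exact norm_pos_iff.mpr h0
    have hpt : ∀ θ : ℝ,
        Real.log (‖F (lam0 + (r:ℂ) * Complex.exp ((θ:ℂ) * Complex.I))‖)
          ≤ Real.log (d (lam0 + (r:ℂ) * Complex.exp ((θ:ℂ) * Complex.I))) := by
      intro θ
      set z := lam0 + (r:ℂ) * Complex.exp ((θ:ℂ) * Complex.I) with hzdef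
      have hz : z ∈ Metric.closedBall lam0 ρ := hcbr (circle_mem_cb hr.1 θ)
      have hzb : z ∈ Metric.ball c R := hsub hz
      refine Real.log_le_log (hFz z hz) ?_
      rw [habsF]
      exact le_csSup (hbdd z hzb) ⟨zs, hzsK, rfl⟩
    have hcirc : Continuous fun θ : ℝ => lam0 + (r:ℂ) * Complex.exp ((θ:ℂ) * Complex.I) := by
      fun_prop
    have hmem : ∀ θ : ℝ, (lam0 + (r:ℂ) * Complex.exp ((θ:ℂ) * Complex.I)) ∈ Metric.ball c R :=
      fun θ => hsub (hcbr (circle_mem_cb hr.1 θ))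
    have hint1 : IntervalIntegrable
        (fun θ : ℝ => Real.log (‖F (lam0 + (r:ℂ) * Complex.exp ((θ:ℂ) * Complex.I))‖))
        MeasureTheory.volume 0 (2*π) := by
      have habs : Continuous fun θ : ℝ =>
          ‖F (lam0 + (r:ℂ) * Complex.exp ((θ:ℂ) * Complex.I))‖ :=
        continuous_norm.comp
          (hFd.continuousOn.comp_continuous hcirc hmem)
      exact (habs.log fun θ => ne_of_gt (hFz _ (hcbr (circle_mem_cb hr.1 θ)))).intervalIntegrable _ _
    have hint2 : IntervalIntegrable
        (fun θ : ℝ => Real.log (d (lam0 + (r:ℂ) * Complex.exp ((θ:ℂ) * Complex.I))))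
        MeasureTheory.volume 0 (2*π) :=
      (hucont.comp_continuous hcirc hmem).intervalIntegrable _ _
    have hile : (∫ θ in (0:ℝ)..(2*π),
          Real.log (‖F (lam0 + (r:ℂ) * Complex.exp ((θ:ℂ) * Complex.I))‖))
        ≤ ∫ θ in (0:ℝ)..(2*π),
          Real.log (d (lam0 + (r:ℂ) * Complex.exp ((θ:ℂ) * Complex.I))) :=
      intervalIntegral.integral_mono_on (by positivity) hint1 hint2 fun θ _ => hpt θ
    calc Real.log (d lam0) = Real.log (‖F lam0‖) := by rw [habsF, hzsG]
      _ = (1/(2*π)) * ∫ θ in (0:ℝ)..(2*π),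
            Real.log (‖F (lam0 + (r:ℂ) * Complex.exp ((θ:ℂ) * Complex.I))‖) := key
      _ ≤ (1/(2*π)) * ∫ θ in (0:ℝ)..(2*π),
            Real.log (d (lam0 + (r:ℂ) * Complex.exp ((θ:ℂ) * Complex.I))) := by
          apply mul_le_mul_of_nonneg_left hile
          positivity
end

section
/- If f is a nonconstant polynomial and the set {z : |f(z)| ≤ 1} is disconnected, then f has a critical value a (i.e., a = f(w) for some w with f'(w) = 0) with |a| > 1. -/
open Complex Polynomial

noncomputable def Complex.abs : AbsoluteValue ℂ ℝ := NormedField.toAbsoluteValue ℂ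

theorem Complex.norm_eq_abs (z : ℂ) : ‖z‖ = Complex.abs z := rfl

theorem Complex.continuous_abs : Continuous (fun z : ℂ => Complex.abs z) := continuous_norm

theorem Complex.abs_ofReal (x : ℝ) : Complex.abs (x : ℂ) = |x| := by
  show ‖(x : ℂ)‖ = |x|; simp

theorem Complex.abs_conj (z : ℂ) : Complex.abs ((starRingEnd ℂ) z) = Complex.abs z := by
  show ‖(starRingEnd ℂ) z‖ = ‖z‖; simp

lemma clamp_lip (a b : ℝ) : |min 1 (max 0 a) - min 1 (max 0 b)| ≤ |a - b| := by
  have hmax : |max 0 a - max 0 b| ≤ |a - b| := by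
    simpa [max_comm] using abs_max_sub_max_le_abs a b 0
  rw [abs_sub_le_iff] at hmax ⊢
  obtain ⟨h1, h2⟩ := hmax
  constructor <;>
  · rcases le_total 1 (max 0 a) with ha|ha <;> rcases le_total 1 (max 0 b) with hb|hb <;>
      simp [min_eq_left, min_eq_right, ha, hb] <;>
      first
        | (refine ⟨by positivity, ?_⟩ ; linarith [le_max_left 0 a, le_max_right 0 a, le_max_left 0 b, le_max_right 0 b, abs_nonneg (a - b)])
        | linarith [le_max_left 0 a, le_max_right 0 a, le_max_left 0 b, le_max_right 0 b,
        abs_nonneg (a - b)]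

/-- Quadratic Taylor bound for polynomials on a ball. -/
lemma poly_taylor_bound (f : Polynomial ℂ) (r : ℝ) :
    ∃ C ≥ 0, ∀ z w : ℂ, Complex.abs z ≤ r → Complex.abs w ≤ 1 →
      Complex.abs (f.eval (z + w) - f.eval z - f.derivative.eval z * w) ≤ C * (Complex.abs w)^2 := by
  set n := f.natDegree with hn
  have hcont : ContinuousOn (fun z : ℂ => ∑ i ∈ Finset.range (n+2),
      Complex.abs ((Polynomial.hasseDeriv i f).eval z)) (Metric.closedBall 0 r) := by
    apply continuousOn_finset_sum
    intro i _
    exact (Complex.continuous_abs.comp (Polynomial.continuous _)).continuousOn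
  rcases (isCompact_closedBall (0:ℂ) r).exists_bound_of_continuousOn hcont with ⟨C, hC⟩
  refine ⟨max C 0, le_max_right _ _, ?_⟩
  intro z w hz hw
  have hzb : z ∈ Metric.closedBall (0:ℂ) r := by
    simpa [Metric.mem_closedBall, Complex.dist_eq, Complex.norm_eq_abs] using hz
  have hCz : (∑ i ∈ Finset.range (n+2), Complex.abs ((Polynomial.hasseDeriv i f).eval z)) ≤ C :=
    le_trans (le_abs_self _) (hC z hzb)
  -- taylor expansion
  have hkey : f.eval (z + w) = ∑ i ∈ Finset.range (n+2), ((Polynomial.taylor z f)).coeff i * w ^ i := by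
    have h1 : f.eval (z + w) = ((Polynomial.taylor z f)).eval w := by
      rw [Polynomial.taylor_apply, Polynomial.eval_comp]; simp [add_comm]
    rw [h1, Polynomial.eval_eq_sum_range' (lt_of_le_of_lt (le_refl _) ?_)]
    · rw [Polynomial.natDegree_taylor]
      omega
  have hsplit : f.eval (z + w) - f.eval z - f.derivative.eval z * w
      = ∑ i ∈ Finset.Ico 2 (n+2), ((Polynomial.taylor z f)).coeff i * w ^ i := by
    rw [hkey, ← Finset.sum_range_add_sum_Ico _ (by omega : 2 ≤ n+2)]
    rw [Finset.sum_range_succ, Finset.sum_range_one]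
    rw [Polynomial.taylor_coeff_zero, Polynomial.taylor_coeff_one]
    ring
  rw [hsplit]
  calc Complex.abs (∑ i ∈ Finset.Ico 2 (n+2), ((Polynomial.taylor z f)).coeff i * w ^ i)
      ≤ ∑ i ∈ Finset.Ico 2 (n+2), Complex.abs (((Polynomial.taylor z f)).coeff i * w ^ i) := by
        exact Complex.abs.sum_le _ _
    _ ≤ ∑ i ∈ Finset.Ico 2 (n+2), Complex.abs (((Polynomial.taylor z f)).coeff i) * (Complex.abs w)^2 := by
        apply Finset.sum_le_sum
        intro i hi
        rw [map_mul, map_pow]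
        apply mul_le_mul_of_nonneg_left _ (Complex.abs.nonneg _)
        have h2 : 2 ≤ i := (Finset.mem_Ico.mp hi).1
        calc (Complex.abs w)^i ≤ (Complex.abs w)^2 :=
              pow_le_pow_of_le_one (Complex.abs.nonneg _) hw h2
          _ = (Complex.abs w)^2 := rfl
    _ = (∑ i ∈ Finset.Ico 2 (n+2), Complex.abs (((Polynomial.taylor z f)).coeff i)) * (Complex.abs w)^2 := by
        rw [Finset.sum_mul]
    _ ≤ (max C 0) * (Complex.abs w)^2 := by
        apply mul_le_mul_of_nonneg_right _ (sq_nonneg _)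
        refine le_trans ?_ (le_max_left C 0)
        refine le_trans ?_ hCz
        simp only [Polynomial.taylor_coeff]
        apply Finset.sum_le_sum_of_subset_of_nonneg
        · intro i hi; simp at hi ⊢; omega
        · intro i _ _; exact Complex.abs.nonneg _

lemma poly_bound (f : Polynomial ℂ) (r : ℝ) :
    ∃ B ≥ 0, ∀ z : ℂ, Complex.abs z ≤ r → Complex.abs (f.eval z) ≤ B := by
  rcases (isCompact_closedBall (0:ℂ) r).exists_bound_of_continuousOn
      ((Complex.continuous_abs.comp (Polynomial.continuous f)).continuousOn) with ⟨B, hB⟩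
  refine ⟨max B 0, le_max_right _ _, fun z hz => ?_⟩
  have := hB z (by simpa [Metric.mem_closedBall, Complex.dist_eq, Complex.norm_eq_abs] using hz)
  exact le_trans (le_trans (le_abs_self _) this) (le_max_left _ _)

lemma poly_lip (f : Polynomial ℂ) (r : ℝ) :
    ∃ B ≥ 0, (∀ z : ℂ, Complex.abs z ≤ r → Complex.abs (f.derivative.eval z) ≤ B) ∧
      (∀ z z' : ℂ, Complex.abs z ≤ r → Complex.abs z' ≤ r →
        Complex.abs (f.eval z - f.eval z') ≤ B * Complex.abs (z - z')) := by
  rcases poly_bound f.derivative r with ⟨B, hB0, hB⟩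
  refine ⟨B, hB0, hB, fun z z' hz hz' => ?_⟩
  have := Convex.norm_image_sub_le_of_norm_deriv_le (𝕜 := ℂ) (f := fun x => f.eval x)
    (s := Metric.closedBall 0 r) (x := z') (y := z) (C := B)
    (fun x _ => f.differentiableAt) (fun x hx => ?_) (convex_closedBall _ _)
    (by simpa [Metric.mem_closedBall, Complex.dist_eq, Complex.norm_eq_abs] using hz')
    (by simpa [Metric.mem_closedBall, Complex.dist_eq, Complex.norm_eq_abs] using hz)
  · simpa [Complex.norm_eq_abs] using this
  · rw [Polynomial.deriv]
    simpa [Complex.norm_eq_abs] using hB x (by simpa [Metric.mem_closedBall, Complex.dist_eq, Complex.norm_eq_abs] using hx)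

lemma poly_proper (f : Polynomial ℂ) (hd : 1 ≤ f.natDegree) (s : ℝ) :
    ∃ R ≥ 0, ∀ z : ℂ, Complex.abs (f.eval z) ≤ s → Complex.abs z ≤ R := by
  have hdeg : 0 < f.degree := Polynomial.natDegree_pos_iff_degree_pos.mp hd
  have T : Filter.Tendsto (fun z : ℂ => ‖f.eval z‖) (Filter.comap (fun z : ℂ => ‖z‖) Filter.atTop)
      Filter.atTop :=
    Polynomial.tendsto_norm_atTop f hdeg Filter.tendsto_comap
  have h := T.eventually (Filter.eventually_gt_atTop s)
  rw [Filter.eventually_comap] at h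
  rcases Filter.eventually_atTop.mp h with ⟨R, hR⟩
  refine ⟨max R 0, le_max_right _ _, fun z hz => ?_⟩
  by_contra hc
  push_neg at hc
  have : s < ‖f.eval z‖ := hR ‖z‖ (le_of_lt (lt_of_le_of_lt (le_max_left _ _) hc)) z rfl
  rw [Complex.norm_eq_abs] at this
  linarith

set_option maxHeartbeats 4000000 in
lemma level_set_preconnected (f : Polynomial ℂ) (hd : 1 ≤ f.natDegree)
    (hcrit : ∀ w : ℂ, f.derivative.eval w = 0 → Complex.abs (f.eval w) ≤ 1) :
    IsPreconnected {z : ℂ | Complex.abs (f.eval z) ≤ 1} := by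
  set E := {z : ℂ | Complex.abs (f.eval z) ≤ 1} with hE
  have hEclosed : IsClosed E :=
    isClosed_le (Complex.continuous_abs.comp (Polynomial.continuous f)) continuous_const
  intro u v hu hv hsuv ⟨α, hαE, hαu⟩ ⟨β, hβE, hβv⟩
  by_contra hne
  have hEuv : ∀ z ∈ E, z ∈ u → z ∈ v → False := by
    intro z hz h1 h2
    exact hne ⟨z, hz, h1, h2⟩
  -- the two compact pieces
  set A := E \ v with hA
  set B := E \ u with hB
  have hAclosed : IsClosed A := hEclosed.sdiff hv
  have hBclosed : IsClosed B := hEclosed.sdiff hu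
  obtain ⟨R₁, hR₁0, hR₁⟩ := poly_proper f hd 1
  have hEbd : E ⊆ Metric.closedBall 0 R₁ := by
    intro z hz
    simpa [Metric.mem_closedBall, Complex.dist_eq, Complex.norm_eq_abs] using hR₁ z hz
  have hAcomp : IsCompact A := Metric.isCompact_of_isClosed_isBounded hAclosed
    ((Metric.isBounded_closedBall).subset ((Set.diff_subset).trans hEbd))
  have hBcomp : IsCompact B := Metric.isCompact_of_isClosed_isBounded hBclosed
    ((Metric.isBounded_closedBall).subset ((Set.diff_subset).trans hEbd))
  have hαA : α ∈ A := ⟨hαE, fun hv' => hEuv α hαE hαu hv'⟩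
  have hβB : β ∈ B := ⟨hβE, fun hu' => hEuv β hβE hu' hβv⟩
  have hABunion : ∀ z ∈ E, z ∈ A ∪ B := by
    intro z hz
    rcases hsuv hz with h | h
    · exact Or.inl ⟨hz, fun hv' => hEuv z hz h hv'⟩
    · exact Or.inr ⟨hz, fun hu' => hEuv z hz hu' h⟩
  -- separation distance
  obtain ⟨a₀, ha₀A, ha₀min⟩ := hAcomp.exists_isMinOn ⟨α, hαA⟩
    (Metric.continuous_infDist_pt B).continuousOn
  set δ := Metric.infDist a₀ B with hδdef
  have hδpos : 0 < δ :=
    (hBclosed.notMem_iff_infDist_pos ⟨β, hβB⟩).mp (fun hb => hb.2 (by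
      rcases hsuv ha₀A.1 with h | h
      · exact h
      · exact absurd h ha₀A.2))
  have hδ : ∀ a ∈ A, ∀ b ∈ B, δ ≤ dist a b := by
    intro a ha b hb
    exact le_trans (ha₀min ha) (Metric.infDist_le_dist_of_mem hb)
  set u' := Metric.thickening (δ/3) A with hu'
  set v' := Metric.thickening (δ/3) B with hv'
  have hu'v' : ∀ z, z ∈ u' → z ∈ v' → False := by
    intro z hz1 hz2
    obtain ⟨a, haA, hda⟩ := Metric.mem_thickening_iff.mp hz1
    obtain ⟨b, hbB, hdb⟩ := Metric.mem_thickening_iff.mp hz2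
    have h0 := hδ a haA b hbB
    have h3 := dist_triangle a z b
    have e1 : dist a z = dist z a := dist_comm a z
    have e2 : dist z b = dist b z := dist_comm z b
    linarith
  -- choice of η
  obtain ⟨η, hηpos, hηhalf, hηsub⟩ :
      ∃ η : ℝ, 0 < η ∧ η ≤ 1/2 ∧ ∀ z : ℂ, Complex.abs (f.eval z) ≤ 1 + η → z ∈ u' ∪ v' := by
    set K₂ := {z : ℂ | Complex.abs (f.eval z) ≤ 2} \ (u' ∪ v') with hK₂
    have hK₂closed : IsClosed K₂ :=
      (isClosed_le (Complex.continuous_abs.comp (Polynomial.continuous f)) continuous_const).sdiff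
        (Metric.isOpen_thickening.union Metric.isOpen_thickening)
    obtain ⟨R₂, hR₂0, hR₂⟩ := poly_proper f hd 2
    have hK₂comp : IsCompact K₂ := Metric.isCompact_of_isClosed_isBounded hK₂closed
      ((Metric.isBounded_closedBall (x := (0:ℂ)) (r := R₂)).subset (by
        intro z hz
        simpa [Metric.mem_closedBall, Complex.dist_eq, Complex.norm_eq_abs] using hR₂ z hz.1))
    rcases Set.eq_empty_or_nonempty K₂ with hemp | hne₂
    · refine ⟨1/2, by norm_num, le_refl _, fun z hz => ?_⟩
      by_contra hzn
      have : z ∈ K₂ := ⟨by simp only [Set.mem_setOf_eq]; linarith, hzn⟩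
      rw [hemp] at this
      exact this
    · obtain ⟨z₀, hz₀K, hz₀min⟩ := hK₂comp.exists_isMinOn hne₂
        ((Complex.continuous_abs.comp (Polynomial.continuous f)).continuousOn)
      set m := Complex.abs (f.eval z₀) with hm
      have hm1 : 1 < m := by
        by_contra hc
        push_neg at hc
        have hz₀E : z₀ ∈ E := hc
        have := hABunion z₀ hz₀E
        have hsub : A ∪ B ⊆ u' ∪ v' :=
          Set.union_subset_union (Metric.self_subset_thickening (by linarith) A)
            (Metric.self_subset_thickening (by linarith) B)
        exact hz₀K.2 (hsub this)
      refine ⟨min ((m-1)/2) (1/2), lt_min (by linarith) (by norm_num), min_le_right _ _, fun z hz => ?_⟩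
      by_contra hzn
      have hzK : z ∈ K₂ := by
        refine ⟨?_, hzn⟩
        simp only [Set.mem_setOf_eq]
        have := min_le_right ((m-1)/2) (1/2)
        linarith
      have h1 := hz₀min hzK
      simp only [Function.comp] at h1
      have h2 : m ≤ Complex.abs (f.eval z) := h1
      have := min_le_left ((m-1)/2) (1/2)
      linarith
  -- global constants
  obtain ⟨S, hS0, hS⟩ := poly_bound f (Complex.abs α + Complex.abs (β - α))
  set s₀ := max S 2 with hs₀
  have hs₀2 : (2:ℝ) ≤ s₀ := le_max_right _ _
  obtain ⟨R₀, hR₀0, hR₀⟩ := poly_proper f hd s₀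
  obtain ⟨B1, hB10, hB1⟩ := poly_bound f R₀
  obtain ⟨B2, hB20, hB2d, hB2lip⟩ := poly_lip f R₀
  obtain ⟨B3, hB30, hB3d, hB3lip⟩ := poly_lip f.derivative R₀
  obtain ⟨C, hC0, hC⟩ := poly_taylor_bound f R₀
  -- lower bound for |f'| on the working region, from the critical value hypothesis
  obtain ⟨c, hcpos, hc⟩ : ∃ c > 0, ∀ z : ℂ, Complex.abs z ≤ R₀ →
      1 + η/2 ≤ Complex.abs (f.eval z) → c ≤ Complex.abs (f.derivative.eval z) := by
    set K := Metric.closedBall (0:ℂ) R₀ ∩ {z : ℂ | 1 + η/2 ≤ Complex.abs (f.eval z)} with hK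
    have hKcomp : IsCompact K := (isCompact_closedBall _ _).inter_right
      (isClosed_le continuous_const (Complex.continuous_abs.comp (Polynomial.continuous f)))
    rcases Set.eq_empty_or_nonempty K with hemp | hne₃
    · refine ⟨1, one_pos, fun z h1 h2 => ?_⟩
      exfalso
      have : z ∈ K := ⟨by simpa [Metric.mem_closedBall, Complex.dist_eq, Complex.norm_eq_abs] using h1, h2⟩
      rw [hemp] at this
      exact this
    · obtain ⟨w₀, hw₀K, hw₀min⟩ := hKcomp.exists_isMinOn hne₃
        ((Complex.continuous_abs.comp (Polynomial.continuous f.derivative)).continuousOn)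
      refine ⟨Complex.abs (f.derivative.eval w₀), ?_, fun z h1 h2 => ?_⟩
      · rw [gt_iff_lt, AbsoluteValue.pos_iff]
        intro h0
        have := hcrit w₀ h0
        have h2 := hw₀K.2
        simp only [Set.mem_setOf_eq] at h2
        linarith
      · exact hw₀min ⟨by simpa [Metric.mem_closedBall, Complex.dist_eq, Complex.norm_eq_abs] using h1, h2⟩
  -- the step-size and related constants
  set D := 1 + B1*B2 + B2^2 + 2*C*s₀ with hD
  have hD1 : 1 ≤ D := by nlinarith
  have hDpos : 0 < D := by linarith
  set t₀ := D⁻¹ with ht₀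
  have ht₀pos : 0 < t₀ := by positivity
  have ht₀D : t₀ * D = 1 := inv_mul_cancel₀ (ne_of_gt hDpos)
  have hkey1 : t₀ * (B1*B2) ≤ 1 := by
    calc t₀ * (B1*B2) ≤ t₀ * D := by apply mul_le_mul_of_nonneg_left _ (le_of_lt ht₀pos); nlinarith
    _ = 1 := ht₀D
  have hkey2 : t₀ * B2^2 ≤ 1 := by
    calc t₀ * B2^2 ≤ t₀ * D := by apply mul_le_mul_of_nonneg_left _ (le_of_lt ht₀pos); nlinarith
    _ = 1 := ht₀D
  have hkey3 : C * t₀ * s₀ ≤ 1/2 := by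
    have : t₀ * (2*C*s₀) ≤ 1 := by
      calc t₀ * (2*C*s₀) ≤ t₀ * D := by apply mul_le_mul_of_nonneg_left _ (le_of_lt ht₀pos); nlinarith
      _ = 1 := ht₀D
    nlinarith
  clear hD ht₀D hD1 hDpos
  clear_value D
  clear ht₀
  clear_value t₀
  -- cutoff function and the descent map
  set θ : ℂ → ℝ := fun z => min 1 (max 0 ((Complex.abs (f.eval z) - 1 - η/2) * (2/η))) with hθdef
  have hθ0 : ∀ z, 0 ≤ θ z := fun z => le_min zero_le_one (le_max_left _ _)
  have hθle : ∀ z, θ z ≤ 1 := fun z => min_le_left _ _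
  have hθzero : ∀ z, Complex.abs (f.eval z) ≤ 1 + η/2 → θ z = 0 := by
    intro z hz
    have h1 : (Complex.abs (f.eval z) - 1 - η/2) * (2/η) ≤ 0 :=
      mul_nonpos_of_nonpos_of_nonneg (by linarith) (by positivity)
    simp only [hθdef]
    rw [max_eq_left h1, min_eq_right zero_le_one]
  have hθone : ∀ z, 1 + η ≤ Complex.abs (f.eval z) → θ z = 1 := by
    intro z hz
    have h1 : (1:ℝ) ≤ (Complex.abs (f.eval z) - 1 - η/2) * (2/η) := by
      rw [← sub_nonneg]
      have e : (Complex.abs (f.eval z) - 1 - η/2) * (2/η) - 1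
          = (Complex.abs (f.eval z) - 1 - η) * (2/η) := by field_simp; ring
      rw [e]
      exact mul_nonneg (by linarith) (by positivity)
    simp only [hθdef]
    rw [min_eq_left (le_trans h1 (le_max_right _ _))]
  have hθsupp : ∀ z, 0 < θ z → 1 + η/2 ≤ Complex.abs (f.eval z) := by
    intro z hz
    by_contra hcon
    push_neg at hcon
    rw [hθzero z (le_of_lt hcon)] at hz
    exact lt_irrefl _ hz
  have hθlip : ∀ z z' : ℂ, Complex.abs z ≤ R₀ → Complex.abs z' ≤ R₀ →
      |θ z - θ z'| ≤ (2/η) * B2 * Complex.abs (z - z') := by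
    intro z z' hz hz'
    have h1 := clamp_lip ((Complex.abs (f.eval z) - 1 - η/2) * (2/η))
      ((Complex.abs (f.eval z') - 1 - η/2) * (2/η))
    have h2 : ((Complex.abs (f.eval z) - 1 - η/2) * (2/η))
        - ((Complex.abs (f.eval z') - 1 - η/2) * (2/η))
        = (Complex.abs (f.eval z) - Complex.abs (f.eval z')) * (2/η) := by ring
    rw [h2, abs_mul, abs_of_pos (by positivity : (0:ℝ) < 2/η)] at h1
    have h3 : |Complex.abs (f.eval z) - Complex.abs (f.eval z')|
        ≤ Complex.abs (f.eval z - f.eval z') :=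
      Complex.abs.abs_abv_sub_le_abv_sub _ _
    have h4 := hB2lip z z' hz hz'
    calc |θ z - θ z'| ≤ |Complex.abs (f.eval z) - Complex.abs (f.eval z')| * (2/η) := h1
    _ ≤ (B2 * Complex.abs (z - z')) * (2/η) := by
        apply mul_le_mul_of_nonneg_right (le_trans h3 h4) (by positivity)
    _ = (2/η) * B2 * Complex.abs (z - z') := by ring
  set Φ : ℂ → ℂ := fun z =>
    z + -((t₀ * θ z : ℝ) : ℂ) * (f.eval z * (starRingEnd ℂ) (f.derivative.eval z)) with hΦdef
  have hΦeq : ∀ z, Φ z =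
      z + -((t₀ * θ z : ℝ) : ℂ) * (f.eval z * (starRingEnd ℂ) (f.derivative.eval z)) :=
    fun z => rfl
  clear hθdef hΦdef
  clear_value θ Φ
  -- the fundamental one-step descent estimate
  have hstep : ∀ z : ℂ, Complex.abs (f.eval z) ≤ s₀ →
      Complex.abs (f.eval (Φ z)) ≤ Complex.abs (f.eval z)
        - (t₀/2) * θ z * (Complex.abs (f.derivative.eval z))^2 * Complex.abs (f.eval z) := by
    intro z hz
    have hzR : Complex.abs z ≤ R₀ := hR₀ z hz
    set a := f.eval z with ha
    set b := f.derivative.eval z with hb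
    set T := t₀ * θ z with hT
    have hT0 : 0 ≤ T := mul_nonneg (le_of_lt ht₀pos) (hθ0 z)
    have hTt₀ : T ≤ t₀ := by
      calc T ≤ t₀ * 1 := mul_le_mul_of_nonneg_left (hθle z) (le_of_lt ht₀pos)
      _ = t₀ := mul_one _
    set w := -((T : ℝ) : ℂ) * (a * (starRingEnd ℂ) b) with hw
    have hΦz : Φ z = z + w := hΦeq z
    set F := Complex.abs a with hF
    set G := Complex.abs b with hG
    have hF0 : 0 ≤ F := Complex.abs.nonneg a
    have hG0 : 0 ≤ G := Complex.abs.nonneg b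
    have hFB1 : F ≤ B1 := hB1 z hzR
    have hGB2 : G ≤ B2 := hB2d z hzR
    have habsw : Complex.abs w = T * (F * G) := by
      rw [hw]
      simp only [map_mul, map_neg_eq_map, Complex.abs_ofReal, Complex.abs_conj]
      rw [_root_.abs_of_nonneg hT0]
    have hw1 : Complex.abs w ≤ 1 := by
      rw [habsw]
      calc T * (F * G) ≤ t₀ * (B1 * B2) :=
            mul_le_mul hTt₀ (mul_le_mul hFB1 hGB2 hG0 hB10) (mul_nonneg hF0 hG0) (le_of_lt ht₀pos)
      _ ≤ 1 := hkey1
    have htaylor := hC z w hzR hw1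
    have hcoef : T * G^2 ≤ 1 := by
      calc T * G^2 ≤ t₀ * B2^2 :=
            mul_le_mul hTt₀ (pow_le_pow_left₀ hG0 hGB2 2) (sq_nonneg G) (le_of_lt ht₀pos)
      _ ≤ 1 := hkey2
    have hbw : a + b * w = a * (((1 - T * G^2 : ℝ)) : ℂ) := by
      have h1 : b * (starRingEnd ℂ) b = ((G ^ 2 : ℝ) : ℂ) := by
        rw [Complex.mul_conj, Complex.normSq_eq_norm_sq]; rfl
      calc a + b * w = a - ((T:ℝ):ℂ) * a * (b * (starRingEnd ℂ) b) := by rw [hw]; ring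
      _ = a - ((T:ℝ):ℂ) * a * ((G^2 : ℝ) : ℂ) := by rw [h1]
      _ = a * (((1 - T * G^2 : ℝ)) : ℂ) := by push_cast; ring
    have habsbw : Complex.abs (a + b * w) = F * (1 - T * G^2) := by
      rw [hbw, map_mul, Complex.abs_ofReal, _root_.abs_of_nonneg (by linarith : (0:ℝ) ≤ 1 - T * G^2)]
    have h5 : Complex.abs (f.eval (z + w)) ≤ F * (1 - T * G^2) + C * (T * (F * G))^2 := by
      calc Complex.abs (f.eval (z + w))
          = Complex.abs ((f.eval (z + w) - a - b * w) + (a + b * w)) := by congr 1; ring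
      _ ≤ Complex.abs (f.eval (z + w) - a - b * w) + Complex.abs (a + b * w) :=
            Complex.abs.add_le _ _
      _ ≤ C * (Complex.abs w)^2 + F * (1 - T * G^2) := by
            rw [habsbw]; exact add_le_add htaylor (le_refl _)
      _ = F * (1 - T * G^2) + C * (T * (F * G))^2 := by rw [habsw]; ring
    have h6 : C * T * F ≤ 1/2 := by
      calc C * T * F ≤ C * (t₀ * s₀) := by
            rw [mul_assoc]
            exact mul_le_mul_of_nonneg_left (mul_le_mul hTt₀ hz hF0 (le_of_lt ht₀pos)) hC0
      _ = C * t₀ * s₀ := by ring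
      _ ≤ 1/2 := hkey3
    have h8 : (C * T * F) * (T * F * G^2) ≤ (1/2) * (T * F * G^2) :=
      mul_le_mul_of_nonneg_right h6 (by positivity)
    rw [hΦz]
    have h9 : (t₀/2) * θ z * G^2 * F = (1/2) * (T * F * G^2) := by rw [hT]; ring
    have h7 : C * (T * (F * G))^2 = (C * T * F) * (T * F * G^2) := by ring
    have h10 : F * (1 - T * G^2) = F - T * F * G^2 := by ring
    linarith
  -- make ambient objects opaque to speed up elaboration
  have hfα : Complex.abs (f.eval α) ≤ 1 := hαE
  have hfβ : Complex.abs (f.eval β) ≤ 1 := hβE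
  have hAu' : A ⊆ u' := Metric.self_subset_thickening (by positivity) A
  have hBv' : B ⊆ v' := Metric.self_subset_thickening (by positivity) B
  have hu'mem : ∀ z : ℂ, z ∈ u' → ∃ x ∈ A, dist z x < δ/3 :=
    fun z hz => Metric.mem_thickening_iff.mp hz
  have hv'mem : ∀ z : ℂ, z ∈ v' → ∃ x ∈ B, dist z x < δ/3 :=
    fun z hz => Metric.mem_thickening_iff.mp hz
  have hSs₀ : S ≤ s₀ := le_max_left _ _
  clear hEclosed hAclosed hBclosed hAcomp hBcomp hEbd hαE hβE hαu hβv hne hsuv hEuv hABunion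
    ha₀A ha₀min hE hA hB hδdef hu' hv' hs₀ hR₁ hR₁0
  clear_value E A B δ u' v' s₀
  clear hu hv
  clear u v E R₁ a₀
  have hdec : ∀ z, Complex.abs (f.eval z) ≤ s₀ →
      Complex.abs (f.eval (Φ z)) ≤ Complex.abs (f.eval z) := by
    intro z hz
    have h := hstep z hz
    have h0 : 0 ≤ (t₀/2) * θ z * (Complex.abs (f.derivative.eval z))^2 * Complex.abs (f.eval z) :=
      mul_nonneg (mul_nonneg (mul_nonneg (by positivity) (hθ0 z)) (sq_nonneg _))
        (Complex.abs.nonneg _)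
    linarith
  set μ := t₀ * c^2 / 2 with hμdef
  have hμpos : 0 < μ := by positivity
  have hdecμ : ∀ z, Complex.abs (f.eval z) ≤ s₀ → 1 + η ≤ Complex.abs (f.eval z) →
      Complex.abs (f.eval (Φ z)) ≤ Complex.abs (f.eval z) - μ := by
    intro z hz h1
    have hzR := hR₀ z hz
    have hθz := hθone z h1
    have hcz : c ≤ Complex.abs (f.derivative.eval z) := hc z hzR (by linarith)
    have hstepz := hstep z hz
    rw [hθz] at hstepz
    have hF1 : 1 ≤ Complex.abs (f.eval z) := by linarith
    have hsq : c^2 ≤ (Complex.abs (f.derivative.eval z))^2 :=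
      pow_le_pow_left₀ (le_of_lt hcpos) hcz 2
    have hle : μ ≤ (t₀/2) * 1 * (Complex.abs (f.derivative.eval z))^2 * Complex.abs (f.eval z) := by
      rw [hμdef]
      calc t₀ * c^2/2 = ((t₀/2) * 1 * c^2) * 1 := by ring
      _ ≤ ((t₀/2) * 1 * (Complex.abs (f.derivative.eval z))^2) * Complex.abs (f.eval z) := by
          apply mul_le_mul _ hF1 zero_le_one _
          · exact mul_le_mul_of_nonneg_left hsq (by positivity)
          · positivity
    linarith
  have hfix : ∀ z, Complex.abs (f.eval z) ≤ 1 → Φ z = z := by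
    intro z hz
    have hθz : θ z = 0 := hθzero z (by linarith)
    rw [hΦeq z, hθz]
    simp
  -- Lipschitz property of Φ
  set L := (2/η) * B2 * (B1 * B2) + (B1 * B3 + B2 * B2) with hLdef
  have hL0 : 0 ≤ L := by positivity
  have hΦlip : ∀ z z', Complex.abs (f.eval z) ≤ s₀ → Complex.abs (f.eval z') ≤ s₀ →
      Complex.abs (Φ z - Φ z') ≤ (1 + t₀ * L) * Complex.abs (z - z') := by
    intro z z' hz hz'
    have hzR := hR₀ z hz
    have hzR' := hR₀ z' hz'
    set a := f.eval z with ha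
    set b := f.derivative.eval z with hb
    set a' := f.eval z' with ha'
    set b' := f.derivative.eval z' with hb'
    set G₁ := a * (starRingEnd ℂ) b with hG₁
    set G₂ := a' * (starRingEnd ℂ) b' with hG₂
    have habsG₁ : Complex.abs G₁ ≤ B1 * B2 := by
      rw [hG₁, map_mul, Complex.abs_conj]
      exact mul_le_mul (hB1 z hzR) (hB2d z hzR) (Complex.abs.nonneg _) hB10
    have hG₁G₂ : Complex.abs (G₁ - G₂) ≤ (B1*B3 + B2*B2) * Complex.abs (z - z') := by
      have e : G₁ - G₂ = a * ((starRingEnd ℂ) (b - b')) + (a - a') * (starRingEnd ℂ) b' := by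
        rw [map_sub]; rw [hG₁, hG₂]; ring
      rw [e]
      calc Complex.abs (a * ((starRingEnd ℂ) (b - b')) + (a - a') * (starRingEnd ℂ) b')
          ≤ Complex.abs (a * ((starRingEnd ℂ) (b - b'))) + Complex.abs ((a - a') * (starRingEnd ℂ) b') :=
            Complex.abs.add_le _ _
      _ = Complex.abs a * Complex.abs (b - b') + Complex.abs (a - a') * Complex.abs b' := by
            rw [map_mul, map_mul, Complex.abs_conj, Complex.abs_conj]
      _ ≤ B1 * (B3 * Complex.abs (z - z')) + (B2 * Complex.abs (z - z')) * B2 := by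
            apply add_le_add
            · exact mul_le_mul (hB1 z hzR) (hB3lip z z' hzR hzR') (Complex.abs.nonneg _) hB10
            · exact mul_le_mul (hB2lip z z' hzR hzR') (hB2d z' hzR') (Complex.abs.nonneg _)
                (mul_nonneg hB20 (Complex.abs.nonneg _))
      _ = (B1*B3 + B2*B2) * Complex.abs (z - z') := by ring
    have hmain : Complex.abs (((θ z : ℝ):ℂ) * G₁ - ((θ z' : ℝ):ℂ) * G₂)
        ≤ L * Complex.abs (z - z') := by
      have e : ((θ z : ℝ):ℂ) * G₁ - ((θ z' : ℝ):ℂ) * G₂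
          = (((θ z : ℝ):ℂ) - ((θ z' : ℝ):ℂ)) * G₁ + ((θ z' : ℝ):ℂ) * (G₁ - G₂) := by ring
      rw [e]
      calc Complex.abs ((((θ z : ℝ):ℂ) - ((θ z' : ℝ):ℂ)) * G₁ + ((θ z' : ℝ):ℂ) * (G₁ - G₂))
          ≤ Complex.abs ((((θ z : ℝ):ℂ) - ((θ z' : ℝ):ℂ)) * G₁)
            + Complex.abs (((θ z' : ℝ):ℂ) * (G₁ - G₂)) := Complex.abs.add_le _ _
      _ = |θ z - θ z'| * Complex.abs G₁ + |θ z'| * Complex.abs (G₁ - G₂) := by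
            simp only [map_mul, ← Complex.ofReal_sub, Complex.abs_ofReal]
      _ ≤ ((2/η) * B2 * Complex.abs (z - z')) * (B1 * B2)
            + 1 * ((B1*B3 + B2*B2) * Complex.abs (z - z')) := by
            apply add_le_add
            · exact mul_le_mul (hθlip z z' hzR hzR') habsG₁ (Complex.abs.nonneg _) (by positivity)
            · apply mul_le_mul _ hG₁G₂ (Complex.abs.nonneg _) zero_le_one
              rw [_root_.abs_of_nonneg (hθ0 z')]
              exact hθle z'
      _ = L * Complex.abs (z - z') := by rw [hLdef]; ring
    rw [hΦeq z, hΦeq z']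
    have e2 : (z + -((t₀ * θ z : ℝ):ℂ) * G₁) - (z' + -((t₀ * θ z' : ℝ):ℂ) * G₂)
        = (z - z') - ((t₀:ℝ):ℂ) * (((θ z : ℝ):ℂ) * G₁ - ((θ z' : ℝ):ℂ) * G₂) := by
      push_cast
      ring
    rw [e2]
    calc Complex.abs ((z - z') - ((t₀:ℝ):ℂ) * (((θ z : ℝ):ℂ) * G₁ - ((θ z' : ℝ):ℂ) * G₂))
        ≤ Complex.abs (z - z')
          + Complex.abs (((t₀:ℝ):ℂ) * (((θ z : ℝ):ℂ) * G₁ - ((θ z' : ℝ):ℂ) * G₂)) := by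
          rw [sub_eq_add_neg]
          refine le_trans (Complex.abs.add_le _ _) ?_
          rw [map_neg_eq_map]
    _ ≤ Complex.abs (z - z') + t₀ * (L * Complex.abs (z - z')) := by
          rw [map_mul, Complex.abs_ofReal, _root_.abs_of_nonneg (le_of_lt ht₀pos)]
          exact add_le_add (le_refl _) (mul_le_mul_of_nonneg_left hmain (le_of_lt ht₀pos))
    _ = (1 + t₀ * L) * Complex.abs (z - z') := by ring
  clear hμdef hLdef hstep hθlip hθone hθsupp hθ0 hθle hθzero hΦeq hc hC hB1 hB2d hB2lip hB3d hB3lip hB10 hB20 hB30 hC0 hkey1 hkey2 hkey3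
  clear_value μ L
  -- chain construction
  set P := 1 + t₀ * L with hPdef
  have hP1 : (1:ℝ) ≤ P := by nlinarith
  have hPpos : (0:ℝ) < P := by linarith
  clear hPdef
  clear_value P
  set N := Nat.ceil ((s₀ - (1+η))/μ) with hNdef
  have hNμ : s₀ - (1+η) ≤ (N:ℝ) * μ := by
    have h1 := Nat.le_ceil ((s₀ - (1+η))/μ)
    rw [div_le_iff₀ hμpos] at h1
    exact h1
  clear hNdef
  clear_value N
  set ε₀ := (δ/3) / (2 * P^N) with hε₀def
  have hε₀pos : 0 < ε₀ := by positivity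
  have hε₀P : ε₀ * P^N < δ/3 := by
    rw [hε₀def]
    have hPN : (0:ℝ) < P^N := by positivity
    have he : (δ/3) / (2 * P^N) * P^N = δ/6 := by field_simp; ring
    rw [he]
    linarith
  clear hε₀def
  clear_value ε₀
  set n := max 1 (Nat.ceil (Complex.abs (β - α) / ε₀)) with hndef
  have hn0 : 0 < n := lt_of_lt_of_le one_pos (le_max_left _ _)
  have hnne : ((n:ℝ)) ≠ 0 := by positivity
  have hnge : Complex.abs (β - α) ≤ (n:ℝ) * ε₀ := by
    have h1 := Nat.le_ceil (Complex.abs (β - α) / ε₀)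
    have h2 : ((Nat.ceil (Complex.abs (β - α) / ε₀) : ℕ) : ℝ) ≤ (n:ℝ) := by
      exact_mod_cast le_max_right 1 _
    rw [div_le_iff₀ hε₀pos] at h1
    calc Complex.abs (β - α) ≤ (Nat.ceil (Complex.abs (β - α) / ε₀) : ℝ) * ε₀ := h1
    _ ≤ (n:ℝ) * ε₀ := mul_le_mul_of_nonneg_right h2 (le_of_lt hε₀pos)
  clear hndef
  clear_value n
  set seg : ℕ → ℂ := fun j => α + (((j:ℝ)/(n:ℝ) : ℝ) : ℂ) * (β - α) with hsegdef
  have hseg0 : seg 0 = α := by simp [hsegdef]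
  have hsegn : seg n = β := by
    simp only [hsegdef]
    rw [div_self hnne]
    push_cast
    ring
  have hsegbound : ∀ j, j ≤ n → Complex.abs (f.eval (seg j)) ≤ s₀ := by
    intro j hj
    refine le_trans (le_trans (hS _ ?_) hSs₀) (le_refl _)
    simp only [hsegdef]
    calc Complex.abs (α + (((j:ℝ)/(n:ℝ) : ℝ) : ℂ) * (β - α))
        ≤ Complex.abs α + Complex.abs ((((j:ℝ)/(n:ℝ) : ℝ) : ℂ) * (β - α)) := Complex.abs.add_le _ _
    _ = Complex.abs α + |((j:ℝ)/(n:ℝ))| * Complex.abs (β - α) := by rw [map_mul, Complex.abs_ofReal]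
    _ ≤ Complex.abs α + 1 * Complex.abs (β - α) := by
        have hj1 : ((j:ℝ)/(n:ℝ)) ≤ 1 := by
          rw [div_le_one (by positivity)]
          exact_mod_cast hj
        have hj0 : (0:ℝ) ≤ ((j:ℝ)/(n:ℝ)) := by positivity
        rw [_root_.abs_of_nonneg hj0]
        exact add_le_add (le_refl _) (mul_le_mul_of_nonneg_right hj1 (Complex.abs.nonneg _))
    _ = Complex.abs α + Complex.abs (β - α) := by ring
  have hseggap : ∀ j : ℕ, Complex.abs (seg (j+1) - seg j) ≤ ε₀ := by
    intro j
    have e2 : ((j+1:ℕ):ℝ)/(n:ℝ) - ((j:ℕ):ℝ)/(n:ℝ) = 1/(n:ℝ) := by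
      push_cast
      field_simp
      ring
    have e : seg (j+1) - seg j = (((1/(n:ℝ)) : ℝ) : ℂ) * (β - α) := by
      simp only [hsegdef]
      rw [← e2]
      push_cast
      ring
    rw [e, map_mul, Complex.abs_ofReal, _root_.abs_of_nonneg (by positivity : (0:ℝ) ≤ 1/(n:ℝ))]
    calc 1/(n:ℝ) * Complex.abs (β - α) ≤ 1/(n:ℝ) * ((n:ℝ) * ε₀) :=
          mul_le_mul_of_nonneg_left hnge (by positivity)
    _ = ε₀ := by field_simp
  set chain : ℕ → ℕ → ℂ := fun k j => Φ^[k] (seg j) with hchaindef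
  have hchain0 : ∀ j, chain 0 j = seg j := fun j => rfl
  have hchainS : ∀ k j, chain (k+1) j = Φ (chain k j) := fun k j =>
    Function.iterate_succ_apply' Φ k (seg j)
  have h1ηs₀ : 1 + η ≤ s₀ := by linarith
  have hInv1 : ∀ k, ∀ j, j ≤ n → Complex.abs (f.eval (chain k j)) ≤ max (1+η) (s₀ - k*μ) := by
    intro k
    induction k with
    | zero =>
      intro j hj
      refine le_max_of_le_right ?_
      push_cast
      simpa [hchain0] using hsegbound j hj
    | succ k ih =>
      intro j hj
      have hk := ih j hj
      have hkμ0 : (0:ℝ) ≤ (k:ℝ) * μ := mul_nonneg (Nat.cast_nonneg k) (le_of_lt hμpos)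
      have hks₀ : Complex.abs (f.eval (chain k j)) ≤ s₀ :=
        le_trans hk (max_le (by linarith) (by linarith))
      rw [hchainS]
      rcases le_or_gt (1+η) (Complex.abs (f.eval (chain k j))) with hcase | hcase
      · have hmain := hdecμ _ hks₀ hcase
        rcases max_cases (1+η) (s₀ - (k:ℝ)*μ) with ⟨heq, hge⟩ | ⟨heq, hge⟩
        · rw [heq] at hk
          refine le_max_of_le_left ?_
          linarith
        · rw [heq] at hk
          refine le_max_of_le_right ?_
          push_cast
          linarith
      · have hmain := hdec _ hks₀
        exact le_max_of_le_left (by linarith)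
  have hchains₀ : ∀ k, ∀ j, j ≤ n → Complex.abs (f.eval (chain k j)) ≤ s₀ := by
    intro k j hj
    have hkμ0 : (0:ℝ) ≤ (k:ℝ) * μ := mul_nonneg (Nat.cast_nonneg k) (le_of_lt hμpos)
    exact le_trans (hInv1 k j hj) (max_le (by linarith) (by linarith))
  have hInv2 : ∀ k, ∀ j, j+1 ≤ n → Complex.abs (chain k (j+1) - chain k j) ≤ ε₀ * P^k := by
    intro k
    induction k with
    | zero =>
      intro j hj
      rw [hchain0, hchain0]
      simpa using hseggap j
    | succ k ih =>
      intro j hj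
      rw [hchainS, hchainS]
      have h1 := hΦlip (chain k (j+1)) (chain k j) (hchains₀ k (j+1) hj)
        (hchains₀ k j (by omega))
      calc Complex.abs (Φ (chain k (j+1)) - Φ (chain k j))
          ≤ P * Complex.abs (chain k (j+1) - chain k j) := h1
      _ ≤ P * (ε₀ * P^k) := mul_le_mul_of_nonneg_left (ih j hj) (le_of_lt hPpos)
      _ = ε₀ * P^(k+1) := by rw [pow_succ]; ring
  have hchainα : ∀ k, chain k 0 = α := by
    intro k
    induction k with
    | zero => rw [hchain0, hseg0]
    | succ k ihk => rw [hchainS, ihk]; exact hfix α hfα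
  have hchainβ : ∀ k, chain k n = β := by
    intro k
    induction k with
    | zero => rw [hchain0, hsegn]
    | succ k ihk => rw [hchainS, ihk]; exact hfix β hfβ
  -- the final chain lies in {|f| ≤ 1+η} with small gaps
  have hfinal : ∀ j, j ≤ n → Complex.abs (f.eval (chain N j)) ≤ 1 + η := by
    intro j hj
    refine le_trans (hInv1 N j hj) (max_le (le_refl _) ?_)
    linarith
  have hgap : ∀ j, j+1 ≤ n → Complex.abs (chain N (j+1) - chain N j) < δ/3 := by
    intro j hj
    refine lt_of_le_of_lt (hInv2 N j hj) hε₀P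
  have hall : ∀ j, j ≤ n → chain N j ∈ u' := by
    intro j
    induction j with
    | zero => intro _; rw [hchainα]; exact hAu' hαA
    | succ j ihj =>
      intro hj
      have hju : chain N j ∈ u' := ihj (by omega)
      rcases hηsub _ (hfinal (j+1) hj) with h | h
      · exact h
      · exfalso
        obtain ⟨x, hxA, hdx⟩ := hu'mem _ hju
        obtain ⟨y, hyB, hdy⟩ := hv'mem _ h
        have hdxy := hδ x hxA y hyB
        have htri := dist_triangle4 x (chain N j) (chain N (j+1)) y
        have hgapj := hgap j hj
        rw [dist_comm x (chain N j)] at htri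
        simp only [Complex.dist_eq, Complex.norm_eq_abs] at htri hdx hdy hdxy
        rw [Complex.abs.map_sub (chain N j) (chain N (j+1))] at htri
        linarith
  have hfin : chain N n ∈ u' := hall n (le_refl n)
  rw [hchainβ] at hfin
  exact hu'v' β hfin (hBv' hβB)

theorem disconnected_level_set_gives_large_critical_value
    (f : Polynomial ℂ) (hd : 1 ≤ f.natDegree)
    (hdis : ¬ IsPreconnected {z : ℂ | ‖f.eval z‖ ≤ 1}) :
    ∃ w : ℂ, f.derivative.eval w = 0 ∧ 1 < ‖f.eval w‖ := by
  by_contra h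
  push_neg at h
  exact hdis (level_set_preconnected f hd (fun w hw => h w hw))
end
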